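/- For nonnegative reals x_1, ..., x_n with geometric mean x = (x_1⋯x_n)^{1/n}, equality holds in (x_1 + ⋯ + x_n)/n = x + (1/n) ∑_{i=1}^n (√x_i − √x)² if and only if x = 0 (i.e., some x_i is zero) or all the x_i are equal. -/

import Mathlib

open Finset Real

theorem quantitative_amgm_equality (n : ℕ) (hn : 1 ≤ n) (x : Fin n → ℝ) (hx : ∀ i, 0 ≤ x i) :
    (∑ i, x i) / n =
      (∏ i, x i) ^ ((1 : ℝ) / n) +
        (1 / n) * ∑ i, (Real.sqrt (x i) - Real.sqrt ((∏ i, x i) ^ ((1 : ℝ) / n))) ^ 2 ↔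
      (∃ i, x i = 0) ∨ (∀ i j, x i = x j) := by
  have hn0 : (n : ℝ) ≠ 0 := Nat.cast_ne_zero.mpr (by omega)
  have hnpos : (0 : ℝ) < n := by positivity
  set G : ℝ := (∏ i, x i) ^ ((1 : ℝ) / n) with hG
  have hprod : 0 ≤ ∏ i, x i := Finset.prod_nonneg fun i _ => hx i
  have hG0 : 0 ≤ G := Real.rpow_nonneg hprod _
  -- expand the sum of squares
  have hsq : ∀ i : Fin n, (Real.sqrt (x i) - Real.sqrt G) ^ 2
      = x i - 2 * Real.sqrt G * Real.sqrt (x i) + G := by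
    intro i
    have h1 : Real.sqrt (x i) ^ 2 = x i := Real.sq_sqrt (hx i)
    have h2 : Real.sqrt G ^ 2 = G := Real.sq_sqrt hG0
    rw [sub_sq, h1, h2]; ring
  have hexp : ∑ i, (Real.sqrt (x i) - Real.sqrt G) ^ 2
      = (∑ i, x i) - 2 * Real.sqrt G * (∑ i, Real.sqrt (x i)) + n * G := by
    rw [Finset.sum_congr rfl fun i _ => hsq i]
    simp [Finset.sum_add_distrib, Finset.sum_sub_distrib, Finset.mul_sum]
  -- the equality is equivalent to √G * (n √G - ∑ √xᵢ) = 0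
  have key : ((∑ i, x i) / n = G + (1 / n) * ∑ i, (Real.sqrt (x i) - Real.sqrt G) ^ 2)
      ↔ Real.sqrt G * ((n : ℝ) * Real.sqrt G - ∑ i, Real.sqrt (x i)) = 0 := by
    rw [hexp]
    have h2 : Real.sqrt G ^ 2 = G := Real.sq_sqrt hG0
    constructor
    · intro h
      field_simp at h
      nlinarith [h, h2]
    · intro h
      field_simp
      nlinarith [h, h2]
  rw [key]
  constructor
  · intro h
    rcases mul_eq_zero.mp h with h | h
    · left
      have : G = 0 := by
        have := Real.sqrt_eq_zero hG0 |>.mp h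
        exact this
      have hp0 : ∏ i, x i = 0 := by
        by_contra hne
        have hppos : 0 < ∏ i, x i := lt_of_le_of_ne hprod (Ne.symm hne)
        have : 0 < G := Real.rpow_pos_of_pos hppos _
        linarith
      obtain ⟨i, _, hi⟩ := Finset.prod_eq_zero_iff.mp hp0
      exact ⟨i, hi⟩
    · -- ∑ √xᵢ = n √G ; use equality case of Jensen for log
      by_cases hGz : G = 0
      · left
        have hp0 : ∏ i, x i = 0 := by
          by_contra hne
          have hppos : 0 < ∏ i, x i := lt_of_le_of_ne hprod (Ne.symm hne)
          have : 0 < G := Real.rpow_pos_of_pos hppos _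
          exact absurd hGz this.ne'
        obtain ⟨i, _, hi⟩ := Finset.prod_eq_zero_iff.mp hp0
        exact ⟨i, hi⟩
      right
      have hGpos : 0 < G := lt_of_le_of_ne hG0 (Ne.symm hGz)
      have hppos : 0 < ∏ i, x i := by
        by_contra hne
        push_neg at hne
        have : ∏ i, x i = 0 := le_antisymm hne hprod
        rw [hG, this, Real.zero_rpow (by positivity)] at hGpos
        exact lt_irrefl 0 hGpos
      have hxpos : ∀ i, 0 < x i := by
        intro i
        rcases (hx i).lt_or_eq with h' | h'
        · exact h'
        · exfalso
          exact hppos.ne' (Finset.prod_eq_zero (Finset.mem_univ i) h'.symm)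
      -- setup Jensen equality
      have hsum : ∑ i, Real.sqrt (x i) = n * Real.sqrt G := by linarith [sub_eq_zero.mp h]
      have hjensen := (strictConcaveOn_log_Ioi.map_sum_eq_iff
        (t := Finset.univ) (w := fun _ : Fin n => (1 : ℝ) / n)
        (p := fun i => Real.sqrt (x i))
        (fun i _ => by positivity)
        (by simp [Finset.sum_const]; field_simp)
        (fun i _ => Set.mem_Ioi.mpr (Real.sqrt_pos.mpr (hxpos i))))
      have hcenter : ∑ i, (1 / (n:ℝ)) • Real.sqrt (x i) = Real.sqrt G := by
        simp only [smul_eq_mul, ← Finset.mul_sum, hsum]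
        field_simp
      have heq : Real.log (∑ i, (1 / (n:ℝ)) • Real.sqrt (x i))
          = ∑ i, (1 / (n:ℝ)) • Real.log (Real.sqrt (x i)) := by
        rw [hcenter]
        have : Real.log (Real.sqrt G) = (1 / (2 * n)) * ∑ i, Real.log (x i) := by
          rw [Real.log_sqrt hG0, hG, Real.log_rpow hppos,
            Real.log_prod (fun i _ => (hxpos i).ne')]
          ring
        rw [this]
        simp only [smul_eq_mul, Real.log_sqrt (hx _)]
        rw [Finset.mul_sum]
        congr 1
        ext i
        ring
      have hall := hjensen.mp heq
      intro i j
      have hi := hall i (Finset.mem_univ i)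
      have hj := hall j (Finset.mem_univ j)
      have : Real.sqrt (x i) = Real.sqrt (x j) := hi.trans hj.symm
      calc x i = Real.sqrt (x i) ^ 2 := (Real.sq_sqrt (hx i)).symm
        _ = Real.sqrt (x j) ^ 2 := by rw [this]
        _ = x j := Real.sq_sqrt (hx j)
  · rintro (⟨i, hi⟩ | hall)
    · have hp0 : ∏ j, x j = 0 := Finset.prod_eq_zero (Finset.mem_univ i) hi
      have : G = 0 := by rw [hG, hp0, Real.zero_rpow (by positivity)]
      rw [show Real.sqrt G = 0 from Real.sqrt_eq_zero'.mpr this.le]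
      ring
    · -- all equal: then all xᵢ = c, G = c, √xᵢ = √G
      obtain ⟨i₀⟩ : Nonempty (Fin n) := ⟨⟨0, by omega⟩⟩
      set c := x i₀ with hc
      have hxc : ∀ i, x i = c := fun i => hall i i₀
      have hGc : G = c := by
        rw [hG]
        have : ∏ i, x i = c ^ n := by
          rw [Finset.prod_congr rfl fun i _ => hxc i]
          simp
        rw [this, ← Real.rpow_natCast c n, ← Real.rpow_mul (hx i₀)]
        field_simp
        simp [hc]
      have : ∀ i, Real.sqrt (x i) = Real.sqrt G := fun i => by rw [hxc i, hGc]
      rw [Finset.sum_congr rfl fun i _ => by rw [this i]]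
      simp
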